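/- arXiv:2507.20339 — 5 statements merged into one kernel-verified Lean document; each statement's English description precedes it below -/
import Mathlib

section
/- If x, y ∈ SOL(Θ, q) and for every index i with x_i > 0 and (Ψ(x)+q)_i = 0 one has (Ψ(y)+q)_i = 0 whenever y_i > 0, then any accumulation point x of a sequence of solutions x^{(k)} ∈ SOL(Θ,q) satisfies (x^{(k)} - x) * (Ψ(x^{(k)}) - Ψ(x)) = 0 for all sufficiently large k. -/
noncomputable def tMap {n : ℕ} (r : ℕ) (a : Fin n → (Fin r → Fin n) → ℝ)
    (x : Fin n → ℝ) : Fin n → ℝ :=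
  fun i => ∑ j : Fin r → Fin n, a i j * ∏ t, x (j t)

noncomputable def Psi {n m : ℕ}
    (A : (k : Fin (m - 1)) → Fin n → (Fin (m - 1 - (k : ℕ)) → Fin n) → ℝ)
    (x : Fin n → ℝ) : Fin n → ℝ :=
  fun i => ∑ k : Fin (m - 1), tMap (m - 1 - (k : ℕ)) (A k) x i

noncomputable def SOL {n m : ℕ}
    (A : (k : Fin (m - 1)) → Fin n → (Fin (m - 1 - (k : ℕ)) → Fin n) → ℝ)
    (q : Fin n → ℝ) : Set (Fin n → ℝ) :=
  {x | (∀ i, 0 ≤ x i) ∧ (∀ i, 0 ≤ Psi A x i + q i) ∧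
    ∑ i, x i * (Psi A x i + q i) = 0}

lemma psi_continuous {n m : ℕ}
    (A : (k : Fin (m - 1)) → Fin n → (Fin (m - 1 - (k : ℕ)) → Fin n) → ℝ)
    (i : Fin n) : Continuous (fun x => Psi A x i) := by
  unfold Psi tMap
  refine continuous_finset_sum _ fun k _ => continuous_finset_sum _ fun j _ => ?_
  exact continuous_const.mul (continuous_finset_prod _ fun t _ => continuous_apply _)

lemma sol_compl {n m : ℕ}
    {A : (k : Fin (m - 1)) → Fin n → (Fin (m - 1 - (k : ℕ)) → Fin n) → ℝ}
    {q : Fin n → ℝ} {y : Fin n → ℝ} (hy : y ∈ SOL A q) (i : Fin n) :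
    y i * (Psi A y i + q i) = 0 := by
  obtain ⟨h1, h2, h3⟩ := hy
  have := (Finset.sum_eq_zero_iff_of_nonneg
    (fun j _ => mul_nonneg (h1 j) (h2 j))).mp h3 i (Finset.mem_univ i)
  exact this

/-- Key lemma: if `x⁽ᵏ⁾ ∈ SOL(Θ,q)` is a sequence of solutions converging to a
solution `x ∈ SOL(Θ,q)` (and solutions satisfy the componentwise complementarity
compatibility condition), then `(x⁽ᵏ⁾ - x) * (Ψ(x⁽ᵏ⁾) - Ψ(x)) = 0` for all
sufficiently large `k`. -/
theorem eventually_hadamard_zero {n m : ℕ}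
    (A : (k : Fin (m - 1)) → Fin n → (Fin (m - 1 - (k : ℕ)) → Fin n) → ℝ)
    (q : Fin n → ℝ) (xs : ℕ → Fin n → ℝ) (x : Fin n → ℝ)
    (hxs : ∀ k, xs k ∈ SOL A q) (hx : x ∈ SOL A q)
    (hcompat : ∀ y ∈ SOL A q, ∀ i, 0 < x i → Psi A x i + q i = 0 →
      0 < y i → Psi A y i + q i = 0)
    (hlim : Filter.Tendsto xs Filter.atTop (nhds x)) :
    ∃ k₀ : ℕ, ∀ k ≥ k₀, ∀ i,
      (xs k i - x i) * (Psi A (xs k) i - Psi A x i) = 0 := by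
  have hev : ∀ᶠ k in Filter.atTop, ∀ i,
      (xs k i - x i) * (Psi A (xs k) i - Psi A x i) = 0 := by
    rw [Filter.eventually_all]
    intro i
    have hlimi : Filter.Tendsto (fun k => xs k i) Filter.atTop (nhds (x i)) :=
      (continuous_apply i).continuousAt.tendsto.comp hlim
    rcases lt_or_eq_of_le (hx.1 i) with hxi | hxi
    · -- x i > 0, so Psi A x i + q i = 0
      have hpsix : Psi A x i + q i = 0 := by
        have := sol_compl hx i
        rcases mul_eq_zero.mp this with h | h
        · exact absurd h (ne_of_gt hxi)
        · exact h
      have hev' : ∀ᶠ k in Filter.atTop, 0 < xs k i :=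
        hlimi.eventually (lt_mem_nhds hxi)
      filter_upwards [hev'] with k hk
      have := hcompat (xs k) (hxs k) i hxi hpsix hk
      have : Psi A (xs k) i - Psi A x i = 0 := by linarith
      rw [this, mul_zero]
    · -- x i = 0
      rcases lt_or_eq_of_le (hx.2.1 i) with hpsi | hpsi
      · -- Psi A x i + q i > 0 : eventually Psi A (xs k) i + q i > 0, so xs k i = 0
        have hlimp : Filter.Tendsto (fun k => Psi A (xs k) i + q i) Filter.atTop
            (nhds (Psi A x i + q i)) :=
          (((psi_continuous A i).tendsto x).comp hlim).add tendsto_const_nhds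
        have hev' : ∀ᶠ k in Filter.atTop, 0 < Psi A (xs k) i + q i :=
          hlimp.eventually (lt_mem_nhds hpsi)
        filter_upwards [hev'] with k hk
        have h0 : xs k i = 0 := by
          rcases mul_eq_zero.mp (sol_compl (hxs k) i) with h | h
          · exact h
          · exact absurd h (ne_of_gt hk)
        rw [h0, ← hxi, sub_self, zero_mul]
      · -- Psi A x i + q i = 0
        filter_upwards with k
        have h1 := sol_compl (hxs k) i
        have : Psi A (xs k) i - Psi A x i = Psi A (xs k) i + q i := by linarith
        rw [this, ← hxi, sub_zero, h1]
  rcases Filter.eventually_atTop.mp hev with ⟨k₀, hk₀⟩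
  exact ⟨k₀, hk₀⟩
end

section
/- Let m be even and A a matrix-based tensor with A x^{m-1} = (Â x)^{[m-1]}. Then for every q ∈ ℝⁿ, SOL(A, q) = SOL(Â, q^{[1/(m-1)]}), i.e., x solves the tensor complementarity problem (x ≥ 0, A x^{m-1} + q ≥ 0, xᵀ(A x^{m-1}+q)=0) if and only if x solves the linear complementarity problem with matrix Â and vector q^{[1/(m-1)]} whose i-th entry is the real (m-1)-th root of q_i. -/
/-- For a matrix-based tensor `A` of even order `m` with `A x^{m-1} = (Â x)^{[m-1]}`,
and any `q ∈ ℝⁿ`, the solution set of `TCP(A,q)` coincides with the solution set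
of the LCP with matrix `Â` and vector `q^{[1/(m-1)]}` whose `i`-th entry `p i`
is the real `(m-1)`-th root of `q i`. -/
theorem matrixBased_SOL_eq {n m : ℕ} (hm : 2 ≤ m) (hmeven : Even m)
    (Ahat : Matrix (Fin n) (Fin n) ℝ) (A : (Fin n → ℝ) → Fin n → ℝ)
    (hA : ∀ x : Fin n → ℝ, ∀ i, A x i = (Ahat.mulVec x i) ^ (m - 1))
    (q p : Fin n → ℝ) (hp : ∀ i, (p i) ^ (m - 1) = q i) :
    ∀ x : Fin n → ℝ,
      ((∀ i, 0 ≤ x i) ∧ (∀ i, 0 ≤ A x i + q i) ∧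
        ∑ i, x i * (A x i + q i) = 0) ↔
      ((∀ i, 0 ≤ x i) ∧ (∀ i, 0 ≤ Ahat.mulVec x i + p i) ∧
        ∑ i, x i * (Ahat.mulVec x i + p i) = 0) := by
  intro x
  have hodd : Odd (m - 1) := Nat.Even.sub_odd (by omega) hmeven odd_one
  have hsm : StrictMono fun a : ℝ => a ^ (m - 1) := hodd.strictMono_pow
  -- componentwise nonneg equivalence
  have hnn : ∀ i, (0 ≤ A x i + q i) ↔ (0 ≤ Ahat.mulVec x i + p i) := by
    intro i
    rw [hA, ← hp i]
    constructor
    · intro h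
      have : (-(p i)) ^ (m - 1) ≤ (Ahat.mulVec x i) ^ (m - 1) := by
        rw [hodd.neg_pow]; linarith
      have := hsm.le_iff_le.mp this
      linarith
    · intro h
      have : (-(p i)) ^ (m - 1) ≤ (Ahat.mulVec x i) ^ (m - 1) :=
        hsm.le_iff_le.mpr (by linarith)
      rw [hodd.neg_pow] at this; linarith
  -- componentwise zero equivalence (given nonneg)
  have hz : ∀ i, (x i * (A x i + q i) = 0) ↔ (x i * (Ahat.mulVec x i + p i) = 0) := by
    intro i
    rw [mul_eq_zero, mul_eq_zero, hA, ← hp i]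
    constructor
    · rintro (h | h)
      · exact Or.inl h
      · right
        have : (Ahat.mulVec x i) ^ (m - 1) = (-(p i)) ^ (m - 1) := by
          rw [hodd.neg_pow]; linarith
        have := hsm.injective this
        linarith
    · rintro (h | h)
      · exact Or.inl h
      · right; rw [show Ahat.mulVec x i = -(p i) by linarith, hodd.neg_pow]; ring
  constructor
  · rintro ⟨hx, hq, hs⟩
    refine ⟨hx, fun i => (hnn i).mp (hq i), ?_⟩
    rw [Finset.sum_eq_zero_iff_of_nonneg (fun i _ => mul_nonneg (hx i) (hq i))] at hs
    exact Finset.sum_eq_zero fun i _ => (hz i).mp (hs i (Finset.mem_univ i))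
  · rintro ⟨hx, hq, hs⟩
    refine ⟨hx, fun i => (hnn i).mpr (hq i), ?_⟩
    rw [Finset.sum_eq_zero_iff_of_nonneg (fun i _ => mul_nonneg (hx i) (hq i))] at hs
    exact Finset.sum_eq_zero fun i _ => (hz i).mpr (hs i (Finset.mem_univ i))
end

section
/- Let m be even and A be a matrix-based tensor corresponding to Â and odd exponent m-1. Then SOL(A, q) is finite for all q ∈ ℝⁿ if and only if SOL(Â, p) is finite for all p ∈ ℝⁿ. -/
/-- Odd powers are surjective on ℝ. -/
lemma odd_pow_surj {r : ℕ} (hr : Odd r) : ∀ a : ℝ, ∃ b : ℝ, b ^ r = a := by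
  have hr0 : r ≠ 0 := by rintro rfl; simp [Nat.odd_iff] at hr
  intro a
  rcases le_or_gt 0 a with ha | ha
  · exact ⟨a ^ ((r : ℝ)⁻¹), Real.rpow_inv_natCast_pow ha hr0⟩
  · refine ⟨-((-a) ^ ((r : ℝ)⁻¹)), ?_⟩
    rw [hr.neg_pow, Real.rpow_inv_natCast_pow (by linarith) hr0, neg_neg]

/-- Key set equality: `SOL(A,q) = SOL(Â, q^{[1/r]})` for odd `r`. -/
lemma sol_set_eq {n : ℕ} {r : ℕ} (hr : Odd r) (Ahat : Matrix (Fin n) (Fin n) ℝ)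
    (p : Fin n → ℝ) :
    {x : Fin n → ℝ | (∀ i, 0 ≤ x i) ∧ (∀ i, 0 ≤ (Ahat.mulVec x i) ^ r + (p i) ^ r) ∧
        ∑ i, x i * ((Ahat.mulVec x i) ^ r + (p i) ^ r) = 0} =
    {x : Fin n → ℝ | (∀ i, 0 ≤ x i) ∧ (∀ i, 0 ≤ Ahat.mulVec x i + p i) ∧
        ∑ i, x i * (Ahat.mulVec x i + p i) = 0} := by
  have hmono := Odd.strictMono_pow (R := ℝ) hr
  have key : ∀ a b : ℝ, 0 ≤ a ^ r + b ^ r ↔ 0 ≤ a + b := by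
    intro a b
    constructor
    · intro h
      have h2 : (-b) ^ r ≤ a ^ r := by rw [hr.neg_pow]; linarith
      have := hmono.le_iff_le.mp h2; linarith
    · intro h
      have := hmono.le_iff_le.mpr (by linarith : -b ≤ a)
      rw [hr.neg_pow] at this; linarith
  have keyeq : ∀ a b : ℝ, a ^ r + b ^ r = 0 ↔ a + b = 0 := by
    intro a b
    have h1 : a ^ r = (-b) ^ r ↔ a = -b := ⟨fun h => hmono.injective h, fun h => by rw [h]⟩
    rw [hr.neg_pow] at h1
    constructor
    · intro h; have : a = -b := h1.mp (by linarith); linarith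
    · intro h; have : a = -b := by linarith
      have := h1.mpr this; linarith
  ext x
  simp only [Set.mem_setOf_eq]
  constructor
  · rintro ⟨hx, hf, hs⟩
    refine ⟨hx, fun i => (key _ _).mp (hf i), ?_⟩
    have hz : ∀ i ∈ Finset.univ, x i * ((Ahat.mulVec x i) ^ r + (p i) ^ r) = 0 := by
      rw [← Finset.sum_eq_zero_iff_of_nonneg
        (fun i _ => mul_nonneg (hx i) (hf i))]
      exact hs
    apply Finset.sum_eq_zero
    intro i _
    rcases mul_eq_zero.mp (hz i (Finset.mem_univ i)) with h | h
    · rw [h, zero_mul]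
    · rw [(keyeq _ _).mp h, mul_zero]
  · rintro ⟨hx, hf, hs⟩
    refine ⟨hx, fun i => (key _ _).mpr (hf i), ?_⟩
    have hz : ∀ i ∈ Finset.univ, x i * (Ahat.mulVec x i + p i) = 0 := by
      rw [← Finset.sum_eq_zero_iff_of_nonneg
        (fun i _ => mul_nonneg (hx i) (hf i))]
      exact hs
    apply Finset.sum_eq_zero
    intro i _
    rcases mul_eq_zero.mp (hz i (Finset.mem_univ i)) with h | h
    · rw [h, zero_mul]
    · rw [(keyeq _ _).mpr h, mul_zero]

/-- For a matrix-based tensor `A` of even order `m` with `A x^{m-1} = (Â x)^{[m-1]}`: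
`SOL(A,q)` is finite for all `q` iff `SOL(Â,p)` is finite for all `p`. -/
theorem matrixBased_finiteness_iff {n m : ℕ} (hm : 2 ≤ m) (hmeven : Even m)
    (Ahat : Matrix (Fin n) (Fin n) ℝ) (A : (Fin n → ℝ) → Fin n → ℝ)
    (hA : ∀ x : Fin n → ℝ, ∀ i, A x i = (Ahat.mulVec x i) ^ (m - 1)) :
    (∀ q : Fin n → ℝ,
      Set.Finite {x : Fin n → ℝ | (∀ i, 0 ≤ x i) ∧ (∀ i, 0 ≤ A x i + q i) ∧
        ∑ i, x i * (A x i + q i) = 0}) ↔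
    (∀ p : Fin n → ℝ,
      Set.Finite {x : Fin n → ℝ | (∀ i, 0 ≤ x i) ∧
        (∀ i, 0 ≤ Ahat.mulVec x i + p i) ∧
        ∑ i, x i * (Ahat.mulVec x i + p i) = 0}) := by
  have hr : Odd (m - 1) := by
    rcases hmeven with ⟨k, rfl⟩
    have hk : 1 ≤ k := by omega
    exact ⟨k - 1, by omega⟩
  constructor
  · intro h p
    have := h (fun i => (p i) ^ (m - 1))
    rwa [show {x : Fin n → ℝ | (∀ i, 0 ≤ x i) ∧ (∀ i, 0 ≤ A x i + (p i) ^ (m-1)) ∧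
        ∑ i, x i * (A x i + (p i) ^ (m-1)) = 0} =
      {x : Fin n → ℝ | (∀ i, 0 ≤ x i) ∧ (∀ i, 0 ≤ (Ahat.mulVec x i) ^ (m-1) + (p i) ^ (m-1)) ∧
        ∑ i, x i * ((Ahat.mulVec x i) ^ (m-1) + (p i) ^ (m-1)) = 0} from by
          ext x; simp only [Set.mem_setOf_eq, hA x], sol_set_eq hr Ahat p] at this
  · intro h q
    choose p hp using fun i => odd_pow_surj hr (q i)
    have hq : q = fun i => (p i) ^ (m - 1) := funext fun i => (hp i).symm
    subst hq
    have := h p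
    rw [← sol_set_eq hr Ahat p] at this
    have heq : {x : Fin n → ℝ | (∀ i, 0 ≤ x i) ∧ (∀ i, 0 ≤ A x i + (p i) ^ (m-1)) ∧
        ∑ i, x i * (A x i + (p i) ^ (m-1)) = 0} =
      {x : Fin n → ℝ | (∀ i, 0 ≤ x i) ∧ (∀ i, 0 ≤ (Ahat.mulVec x i) ^ (m-1) + (p i) ^ (m-1)) ∧
        ∑ i, x i * ((Ahat.mulVec x i) ^ (m-1) + (p i) ^ (m-1)) = 0} := by
      ext x; simp only [Set.mem_setOf_eq, hA x]
    rw [heq]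
    exact this
end

section
/- For every q ∈ ℝ², the set SOL = { x ∈ ℝ² : x ≥ 0, Ψ(x)+q ≥ 0, xᵀ(Ψ(x)+q) = 0 } with Ψ(x) = (x₁³+x₂³+x₁²+x₁, -x₂³+x₂) is finite. -/
private lemma cubic_sm : StrictMono (fun x : ℝ => x ^ 3 + x ^ 2 + x) := by
  intro a b hab
  simp only
  nlinarith [sq_nonneg (a + b), sq_nonneg (a - b), sq_nonneg a, sq_nonneg b,
    sq_nonneg (a + b + 1), sq_nonneg (a*b)]

private lemma cubic_fin (c : ℝ) : Set.Finite {a : ℝ | a ^ 3 + a ^ 2 + a = c} := by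
  apply Set.Subsingleton.finite
  intro a ha b hb
  exact cubic_sm.injective (ha.trans hb.symm)

private lemma root_fin (q₂ : ℝ) : Set.Finite {t : ℝ | -t ^ 3 + t + q₂ = 0} := by
  have hp : (Polynomial.X ^ 3 - Polynomial.X - Polynomial.C q₂ : Polynomial ℝ) ≠ 0 := by
    intro h
    have := congrArg (fun p => Polynomial.coeff p 3) h
    simp [Polynomial.coeff_X, Polynomial.coeff_C] at this
  have := Polynomial.finite_setOf_isRoot hp
  apply Set.Finite.subset this
  intro t ht
  simp only [Set.mem_setOf_eq] at ht ⊢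
  simp only [Polynomial.IsRoot, Polynomial.eval_sub, Polynomial.eval_pow,
    Polynomial.eval_X, Polynomial.eval_C]
  linarith

/-- For every `q ∈ ℝ²`, the PCP solution set with
`Ψ(x) = (x₁³+x₂³+x₁²+x₁, -x₂³+x₂)` is finite. -/
theorem example_finiteness_property :
    ∀ q₁ q₂ : ℝ,
      Set.Finite {x : ℝ × ℝ | 0 ≤ x.1 ∧ 0 ≤ x.2 ∧
        0 ≤ x.1 ^ 3 + x.2 ^ 3 + x.1 ^ 2 + x.1 + q₁ ∧
        0 ≤ -x.2 ^ 3 + x.2 + q₂ ∧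
        x.1 * (x.1 ^ 3 + x.2 ^ 3 + x.1 ^ 2 + x.1 + q₁) +
          x.2 * (-x.2 ^ 3 + x.2 + q₂) = 0} := by
  intro q₁ q₂
  set S₂ : Set ℝ := {0} ∪ {t : ℝ | -t ^ 3 + t + q₂ = 0} with hS₂
  have hS₂fin : S₂.Finite := (Set.finite_singleton 0).union (root_fin q₂)
  have hbig : Set.Finite (⋃ b ∈ S₂,
      ({0} ∪ {a : ℝ | a ^ 3 + a ^ 2 + a = -(b ^ 3 + q₁)}) ×ˢ ({b} : Set ℝ)) := by
    apply hS₂fin.biUnion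
    intro b _
    exact (((Set.finite_singleton 0).union (cubic_fin _)).prod (Set.finite_singleton b))
  apply Set.Finite.subset hbig
  rintro ⟨a, b⟩ ⟨h1, h2, h3, h4, h5⟩
  simp only at h1 h2 h3 h4 h5
  have hA : a * (a ^ 3 + b ^ 3 + a ^ 2 + a + q₁) = 0 := by
    nlinarith [mul_nonneg h1 h3, mul_nonneg h2 h4]
  have hB : b * (-b ^ 3 + b + q₂) = 0 := by
    nlinarith [mul_nonneg h1 h3, mul_nonneg h2 h4]
  have hb : b ∈ S₂ := by
    rcases mul_eq_zero.mp hB with h | h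
    · exact Or.inl h
    · exact Or.inr h
  refine Set.mem_biUnion hb ?_
  constructor
  · rcases mul_eq_zero.mp hA with h | h
    · exact Or.inl h
    · right; simp only [Set.mem_setOf_eq]; linarith
  · rfl
end

section
/- The tensor tuple on ℝ³ with Ψ(x) = (x₁³+x₁, x₂²+x₃², x₂²+x₃²) is non-degenerate, but for q = (0,-1,-1) the solution set SOL(Θ,q) is infinite: every vector (0, cos t, sin t) with 0 ≤ t ≤ π/2 is a solution. Hence a non-degenerate tensor tuple need not have the finiteness property. -/
/-- The tensor tuple on `ℝ³` with `Ψ(x) = (x₁³+x₁, x₂²+x₃², x₂²+x₃²)` is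
non-degenerate, yet for `q = (0,-1,-1)` every `(0, cos t, sin t)`, `t ∈ [0,π/2]`,
lies in the PCP solution set, which is therefore infinite; hence a
non-degenerate tensor tuple need not have the finiteness property. -/
theorem example_nondegenerate_without_finiteness :
    (∀ x₁ x₂ x₃ : ℝ,
      x₁ * (x₁ ^ 3 + x₁) = 0 → x₂ * (x₂ ^ 2 + x₃ ^ 2) = 0 →
      x₃ * (x₂ ^ 2 + x₃ ^ 2) = 0 → x₁ = 0 ∧ x₂ = 0 ∧ x₃ = 0) ∧
    (∀ t : ℝ, 0 ≤ t → t ≤ Real.pi / 2 →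
      ((0 : ℝ), Real.cos t, Real.sin t) ∈
        {x : ℝ × ℝ × ℝ | (0 ≤ x.1 ∧ 0 ≤ x.2.1 ∧ 0 ≤ x.2.2) ∧
          (0 ≤ x.1 ^ 3 + x.1 + 0 ∧ 0 ≤ x.2.1 ^ 2 + x.2.2 ^ 2 + (-1) ∧
            0 ≤ x.2.1 ^ 2 + x.2.2 ^ 2 + (-1)) ∧
          x.1 * (x.1 ^ 3 + x.1 + 0) + x.2.1 * (x.2.1 ^ 2 + x.2.2 ^ 2 + (-1)) +
            x.2.2 * (x.2.1 ^ 2 + x.2.2 ^ 2 + (-1)) = 0}) ∧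
    Set.Infinite {x : ℝ × ℝ × ℝ | (0 ≤ x.1 ∧ 0 ≤ x.2.1 ∧ 0 ≤ x.2.2) ∧
      (0 ≤ x.1 ^ 3 + x.1 + 0 ∧ 0 ≤ x.2.1 ^ 2 + x.2.2 ^ 2 + (-1) ∧
        0 ≤ x.2.1 ^ 2 + x.2.2 ^ 2 + (-1)) ∧
      x.1 * (x.1 ^ 3 + x.1 + 0) + x.2.1 * (x.2.1 ^ 2 + x.2.2 ^ 2 + (-1)) +
        x.2.2 * (x.2.1 ^ 2 + x.2.2 ^ 2 + (-1)) = 0} := by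
  have hmem : ∀ t : ℝ, 0 ≤ t → t ≤ Real.pi / 2 →
      ((0 : ℝ), Real.cos t, Real.sin t) ∈
        {x : ℝ × ℝ × ℝ | (0 ≤ x.1 ∧ 0 ≤ x.2.1 ∧ 0 ≤ x.2.2) ∧
          (0 ≤ x.1 ^ 3 + x.1 + 0 ∧ 0 ≤ x.2.1 ^ 2 + x.2.2 ^ 2 + (-1) ∧
            0 ≤ x.2.1 ^ 2 + x.2.2 ^ 2 + (-1)) ∧
          x.1 * (x.1 ^ 3 + x.1 + 0) + x.2.1 * (x.2.1 ^ 2 + x.2.2 ^ 2 + (-1)) +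
            x.2.2 * (x.2.1 ^ 2 + x.2.2 ^ 2 + (-1)) = 0} := by
    intro t ht0 ht1
    have hc : 0 ≤ Real.cos t := Real.cos_nonneg_of_mem_Icc
      ⟨le_trans (by linarith [Real.pi_pos]) ht0, ht1⟩
    have hs : 0 ≤ Real.sin t := Real.sin_nonneg_of_nonneg_of_le_pi ht0
      (ht1.trans (by linarith [Real.pi_pos]))
    have hcs : Real.cos t ^ 2 + Real.sin t ^ 2 = 1 := by
      rw [add_comm]; exact Real.sin_sq_add_cos_sq t
    refine ⟨⟨le_refl 0, hc, hs⟩, ⟨by norm_num, by rw [hcs]; norm_num,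
      by rw [hcs]; norm_num⟩, by rw [hcs]; ring⟩
  refine ⟨?_, hmem, ?_⟩
  · intro x₁ x₂ x₃ h1 h2 h3
    have h4 : (x₂ ^ 2 + x₃ ^ 2) ^ 2 = 0 := by
      linear_combination x₂ * h2 + x₃ * h3
    have h5 : x₂ ^ 2 + x₃ ^ 2 = 0 := by
      nlinarith [sq_nonneg (x₂ ^ 2 + x₃ ^ 2)]
    refine ⟨?_, ?_, ?_⟩ <;> nlinarith [sq_nonneg x₁, sq_nonneg x₂, sq_nonneg x₃,
      sq_nonneg (x₁ ^ 2)]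
  · have : Infinite (Set.Icc (0 : ℝ) (Real.pi / 2)) :=
      Set.Icc.infinite (by positivity)
    apply Set.infinite_of_injective_forall_mem
      (f := fun t : Set.Icc (0 : ℝ) (Real.pi / 2) =>
        ((0 : ℝ), Real.cos t.1, Real.sin t.1))
    · intro a b hab
      have hsab : Real.sin a.1 = Real.sin b.1 := congrArg (fun p => p.2.2) hab
      have key : a.1 = b.1 := Real.injOn_sin
        ⟨by linarith [a.2.1, Real.pi_pos], a.2.2⟩
        ⟨by linarith [b.2.1, Real.pi_pos], b.2.2⟩ hsab
      exact Subtype.ext key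
    · intro t
      exact hmem t.1 t.2.1 t.2.2
end
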